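/- arXiv:1702.01345 — 2 statements merged into one kernel-verified Lean document; each statement's English description precedes it below -/
import Mathlib

section
/- Let R be a commutative ring and A a commutative R-algebra such that the structure map f_A : R → A satisfies the Going-Down property. Assume that f-dim_R(A) = dim_m(A) for every m ∈ Max_e^A(R), the set of maximal elements of Spec_e^A(R). Then f-dim_R(A) + dim_e^A(R) ≤ dim(A) ≤ f-dim_R(A) + (1 + f-dim_R(A)) · dim_e^A(R). -/
open TensorProduct

noncomputable section

/-- The residue field `κ(p)` of a commutative ring `R` at a prime ideal `p`, realised as the
residue field of the localization of `R` at `p`; it is an `R`-algebra. -/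
abbrev Kappa (R : Type*) [CommRing R] (p : Ideal R) [p.IsPrime] : Type _ :=
  IsLocalRing.ResidueField (Localization.AtPrime p)

/-- The fibre ring `κ(p) ⊗_R A` of an `R`-algebra `A` at a prime ideal `p` of `R`. -/
abbrev FiberRing (R A : Type*) [CommRing R] [CommRing A] [Algebra R A]
    (p : Ideal R) [p.IsPrime] : Type _ :=
  (Kappa R p) ⊗[R] A

/-- A prime `p` of `R` is *effective* with respect to the `R`-algebra `A` if the fibre ring
`κ(p) ⊗_R A` is nonzero. -/
def IsEffective (R A : Type*) [CommRing R] [CommRing A] [Algebra R A]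
    (p : PrimeSpectrum R) : Prop :=
  Nontrivial (FiberRing R A p.asIdeal)

/-- `dim_p(A) := dim (κ(p) ⊗_R A)`, the Krull dimension of the fibre ring of `A` at `p`. -/
def fiberDim (R A : Type*) [CommRing R] [CommRing A] [Algebra R A]
    (p : Ideal R) [p.IsPrime] : WithBot ℕ∞ :=
  ringKrullDim (FiberRing R A p)

/-- `f-dim_R(A) := sup {dim_p(A) : p ∈ Spec_e^A(R)}`, the fibre Krull dimension of `A` over `R`. -/
def fdim (R A : Type*) [CommRing R] [CommRing A] [Algebra R A] : WithBot ℕ∞ :=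
  ⨆ p : {p : PrimeSpectrum R // IsEffective R A p}, fiberDim R A p.1.asIdeal

/-- `dim_e^A(R)`, the effective Krull dimension of `R` with respect to `A`: the supremum of
lengths of chains of primes of `R` consisting of effective primes with respect to `A`. -/
def edim (R A : Type*) [CommRing R] [CommRing A] [Algebra R A] : WithBot ℕ∞ :=
  Order.krullDim {p : PrimeSpectrum R // IsEffective R A p}

/-- A ring homomorphism `f : R → A` satisfies the Going-Down property if for any primes
`p ⊆ q` of `R` and any prime `Q` of `A` with `f⁻¹(Q) = q` there is a prime `P ⊆ Q` of `A`
with `f⁻¹(P) = p`. -/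
def SatisfiesGoingDown {R A : Type*} [CommRing R] [CommRing A] (f : R →+* A) : Prop :=
  ∀ p q : Ideal R, p.IsPrime → q.IsPrime → p ≤ q →
    ∀ Q : Ideal A, Q.IsPrime → Q.comap f = q →
      ∃ P : Ideal A, P.IsPrime ∧ P ≤ Q ∧ P.comap f = p

/-- The transcendence degree (as an extended natural number) of an algebra `L` over `K`:
the supremum of the cardinalities of finite algebraically independent subsets of `L`. -/
def algTrdeg (K L : Type*) [CommRing K] [CommRing L] [Algebra K L] : ℕ∞ :=
  ⨆ s : {s : Finset L // AlgebraicIndependent K (Subtype.val : {x : L // x ∈ s} → L)},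
    (s.1.card : ℕ∞)

/-- Transcendence degree along a ring homomorphism. -/
def rhTrdeg {K L : Type*} [CommRing K] [CommRing L] (f : K →+* L) : ℕ∞ :=
  @algTrdeg K L _ _ f.toAlgebra

/-- `t.d.(C : k)`: the supremum, over the primes `q` of `C`, of the transcendence degree of
`Frac(C/q)` over `k`. -/
def tdRing (k C : Type*) [CommRing k] [CommRing C] [Algebra k C] : ℕ∞ :=
  ⨆ q : PrimeSpectrum C, algTrdeg k (FractionRing (C ⧸ q.asIdeal))

/-- `t.d._p(C : R) := t.d.(κ(p) ⊗_R C : κ(p))`, the transcendence degree of `C` over `R`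
at the prime `p`. -/
def tdLocal (R C : Type*) [CommRing R] [CommRing C] [Algebra R C]
    (p : Ideal R) [p.IsPrime] : ℕ∞ :=
  tdRing (Kappa R p) (FiberRing R C p)

/-- `Spec_p(A)`: the primes of `A` contracting to `p` over `R`. -/
abbrev SpecAt (R A : Type*) [CommRing R] [CommRing A] [Algebra R A] (p : Ideal R) : Type _ :=
  {P : PrimeSpectrum A // P.asIdeal.comap (algebraMap R A) = p}

/-- `ht_p(P)`: the supremum of lengths of chains of primes of `A` contracting to `p`
and ending at `P`. -/
def htLocal (R : Type*) {A : Type*} [CommRing R] [CommRing A] [Algebra R A] {p : Ideal R}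
    (P : SpecAt R A p) : ℕ∞ :=
  Order.height P

/-- A `k`-algebra `C` over a field `k` is an AF-ring if
`ht(Q) + t.d.(C/Q : k) = t.d.(C_Q : k)` for every prime `Q` of `C`. -/
def IsAFRing (k C : Type*) [Field k] [CommRing C] [Algebra k C] : Prop :=
  ∀ Q : PrimeSpectrum C,
    Order.height Q + tdRing k (C ⧸ Q.asIdeal) = tdRing k (Localization.AtPrime Q.asIdeal)

/-- `A` is a fibred AF-ring at a prime `p` of `R`: the fibre ring `κ(p) ⊗_R A` is nonzero
and is an AF-ring over `κ(p)`. -/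
def IsFibredAFRingAt (R A : Type*) [CommRing R] [CommRing A] [Algebra R A]
    (p : PrimeSpectrum R) : Prop :=
  Nontrivial (FiberRing R A p.asIdeal) ∧
    IsAFRing (Kappa R p.asIdeal) (FiberRing R A p.asIdeal)

/-- `A` is a fibred AF-ring over `R`: every nonzero fibre ring `κ(p) ⊗_R A` is an AF-ring
over `κ(p)`. -/
def IsFibredAFRing (R A : Type*) [CommRing R] [CommRing A] [Algebra R A] : Prop :=
  ∀ p : PrimeSpectrum R, Nontrivial (FiberRing R A p.asIdeal) →
    IsAFRing (Kappa R p.asIdeal) (FiberRing R A p.asIdeal)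

/-- The extension `Q[n] = Q·C[X₁,…,Xₙ]` of a prime `Q` of `C` to the polynomial ring
in `n` indeterminates; it is again prime. -/
def polyExt {C : Type*} [CommRing C] (n : ℕ) (Q : PrimeSpectrum C) :
    PrimeSpectrum (MvPolynomial (Fin n) C) :=
  ⟨Q.asIdeal.map MvPolynomial.C, by
    have h : RingHom.ker (MvPolynomial.map (σ := Fin n) (Ideal.Quotient.mk Q.asIdeal)) =
        Q.asIdeal.map MvPolynomial.C := by
      rw [MvPolynomial.ker_map, Ideal.mk_ker]
    rw [← h]
    exact RingHom.ker_isPrime _⟩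

/-- `ht(Q[s])` for `s : ℕ∞`: for finite `s = n` it is the height of `Q[n]`, and for
`s = ⊤` it is the supremum over all finite `n` of the heights of the `Q[n]`. -/
def polyExtHeight {C : Type*} [CommRing C] (Q : PrimeSpectrum C) (s : ℕ∞) : ℕ∞ :=
  WithTop.recTopCoe (⨆ n : ℕ, Order.height (polyExt n Q))
    (fun n => Order.height (polyExt n Q)) s

/-- Wadsworth's invariant
`D(s, d, C) := sup {ht(Q[s]) + min(s, d + t.d.(C/Q : k)) : Q ∈ Spec C}`. -/
def Dinv (k C : Type*) [Field k] [CommRing C] [Algebra k C] (s d : ℕ∞) : ℕ∞ :=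
  ⨆ Q : PrimeSpectrum C, polyExtHeight Q s + min s (d + tdRing k (C ⧸ Q.asIdeal))

/-- `D_p(s, d, B) := D(s, d, κ(p) ⊗_R B)`. -/
def DLocal (R B : Type*) [CommRing R] [CommRing B] [Algebra R B]
    (p : Ideal R) [p.IsPrime] (s d : ℕ∞) : ℕ∞ :=
  Dinv (Kappa R p) (FiberRing R B p) s d


/-- The Krull dimension of a commutative ring, as an element of `WithBot ℕ∞`
(definitionally equal to `ringKrullDim`). -/
def ringDim (A : Type*) [CommRing A] : WithBot ℕ∞ :=
  ringKrullDim A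

section Aux

variable {R A : Type*} [CommRing R] [CommRing A] [Algebra R A] (p : Ideal R) [p.IsPrime]

lemma ker_kappa : RingHom.ker (algebraMap R (Kappa R p)) = p := by
  ext x
  rw [RingHom.mem_ker, IsScalarTower.algebraMap_apply R (Localization.AtPrime p) (Kappa R p)]
  have h0 : ∀ y : Localization.AtPrime p,
      IsLocalRing.residue _ y = 0 ↔ y ∈ IsLocalRing.maximalIdeal (Localization.AtPrime p) :=
    fun y => Ideal.Quotient.eq_zero_iff_mem
  change IsLocalRing.residue _ _ = 0 ↔ _
  rw [h0]
  constructor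
  · intro h
    have h2 := Ideal.mem_comap.mpr h
    rwa [← Ideal.under_def, Localization.AtPrime.comap_maximalIdeal] at h2
  · intro h
    exact Ideal.mem_comap.mp (by rwa [← Ideal.under_def, Localization.AtPrime.comap_maximalIdeal])

lemma isUnit_algebraMap_kappa (s : p.primeCompl) : IsUnit (algebraMap R (Kappa R p) s) := by
  rw [IsScalarTower.algebraMap_apply R (Localization.AtPrime p) (Kappa R p)]
  exact (IsLocalization.map_units (Localization.AtPrime p) s).map _

lemma isUnit_algebraMap_fiber (s : p.primeCompl) :
    IsUnit (algebraMap R (FiberRing R A p) s) := by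
  rw [IsScalarTower.algebraMap_apply R (Kappa R p) (FiberRing R A p)]
  exact (isUnit_algebraMap_kappa p s).map _

end Aux

section Aux2

variable {R A : Type*} [CommRing R] [CommRing A] [Algebra R A] (p : Ideal R) [p.IsPrime]

/-- Every element of the fibre ring becomes, after multiplication by the image of some
`s ∉ p`, an element of the image of `A`. -/
lemma exists_denom (x : FiberRing R A p) :
    ∃ (s : p.primeCompl) (a : A),
      (algebraMap R (FiberRing R A p) s) * x = Algebra.TensorProduct.includeRight a := by
  induction x using TensorProduct.induction_on with
  | zero => exact ⟨1, 0, by simp⟩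
  | tmul k a =>
    obtain ⟨y, rfl⟩ := IsLocalRing.residue_surjective (R := Localization.AtPrime p) k
    obtain ⟨⟨r, s⟩, hrs⟩ := IsLocalization.surj p.primeCompl y
    refine ⟨s, algebraMap R A r * a, ?_⟩
    have h1 : (algebraMap R (FiberRing R A p) s) = (algebraMap R (Kappa R p) s) ⊗ₜ[R] (1 : A) := by
      rw [IsScalarTower.algebraMap_apply R (Kappa R p) (FiberRing R A p)]
      rfl
    have h2 : (algebraMap R (Kappa R p) s) * (IsLocalRing.residue _ y) =
        algebraMap R (Kappa R p) r := by
      rw [IsScalarTower.algebraMap_apply R (Localization.AtPrime p) (Kappa R p),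
        IsScalarTower.algebraMap_apply R (Localization.AtPrime p) (Kappa R p)]
      change IsLocalRing.residue _ _ * IsLocalRing.residue _ _ = IsLocalRing.residue _ _
      rw [← map_mul, mul_comm, hrs]
    rw [h1, Algebra.TensorProduct.tmul_mul_tmul, one_mul, h2]
    have h3 : (algebraMap R (Kappa R p) r) ⊗ₜ[R] a = (1 : Kappa R p) ⊗ₜ[R] (r • a) := by
      rw [Algebra.algebraMap_eq_smul_one, TensorProduct.smul_tmul]
    rw [h3, Algebra.smul_def]
    rfl
  | add x y hx hy =>
    obtain ⟨s₁, a₁, h₁⟩ := hx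
    obtain ⟨s₂, a₂, h₂⟩ := hy
    refine ⟨s₁ * s₂, algebraMap R A s₂ * a₁ + algebraMap R A s₁ * a₂, ?_⟩
    have e1 : Algebra.TensorProduct.includeRight (R := R) (A := Kappa R p) (algebraMap R A s₂)
        = algebraMap R (FiberRing R A p) s₂ := Algebra.TensorProduct.includeRight.commutes _
    have e2 : Algebra.TensorProduct.includeRight (R := R) (A := Kappa R p) (algebraMap R A s₁)
        = algebraMap R (FiberRing R A p) s₁ := Algebra.TensorProduct.includeRight.commutes _
    rw [map_add, map_mul, map_mul, e1, e2, Submonoid.coe_mul, map_mul, mul_add]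
    rw [← h₁, ← h₂]
    ring

/-- Any prime of the fibre ring contracts to `p` in `R`. -/
lemma comap_fiber_prime (Q : Ideal (FiberRing R A p)) (hQ : Q.IsPrime) :
    Q.comap (algebraMap R (FiberRing R A p)) = p := by
  ext x
  simp only [Ideal.mem_comap]
  constructor
  · intro h
    by_contra hx
    exact hQ.ne_top (Ideal.eq_top_of_isUnit_mem Q h (isUnit_algebraMap_fiber p ⟨x, hx⟩))
  · intro h
    have : algebraMap R (FiberRing R A p) x = 0 := by
      rw [IsScalarTower.algebraMap_apply R (Kappa R p) (FiberRing R A p)]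
      have hk : algebraMap R (Kappa R p) x = 0 := by
        rw [← RingHom.mem_ker, ker_kappa]; exact h
      rw [hk, map_zero]
    rw [this]
    exact Q.zero_mem

/-- The contraction map from the fibre ring spectrum reflects inclusions. -/
lemma fiber_comap_reflects (Q₁ Q₂ : Ideal (FiberRing R A p)) (h₂ : Q₂.IsPrime)
    (h : Q₁.comap (Algebra.TensorProduct.includeRight (R := R) (A := Kappa R p)
          (B := A)).toRingHom ≤
        Q₂.comap (Algebra.TensorProduct.includeRight (R := R) (A := Kappa R p)
          (B := A)).toRingHom) :
    Q₁ ≤ Q₂ := by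
  intro x hx
  obtain ⟨s, a, hsa⟩ := exists_denom p x
  have h1 : Algebra.TensorProduct.includeRight (R := R) (A := Kappa R p) a ∈ Q₁ := by
    rw [← hsa]; exact Q₁.mul_mem_left _ hx
  have h2 : Algebra.TensorProduct.includeRight (R := R) (A := Kappa R p) a ∈ Q₂ := h h1
  have h3 : (algebraMap R (FiberRing R A p) s) * x ∈ Q₂ := by rw [hsa]; exact h2
  rcases h₂.mem_or_mem h3 with h4 | h4
  · exact absurd (Ideal.eq_top_of_isUnit_mem Q₂ h4 (isUnit_algebraMap_fiber p s)) h₂.ne_top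
  · exact h4

end Aux2

section Aux3

variable {R A : Type*} [CommRing R] [CommRing A] [Algebra R A] (p : Ideal R) [p.IsPrime]

/-- Given a prime `P` of `A` lying over `p`, there is a prime of the fibre ring contracting
to `P`. -/
lemma exists_fiber_prime_over (P : Ideal A) (hP : P.IsPrime)
    (hc : P.comap (algebraMap R A) = p) :
    ∃ Q : Ideal (FiberRing R A p), Q.IsPrime ∧
      Q.comap (Algebra.TensorProduct.includeRight (R := R) (A := Kappa R p)
        (B := A)).toRingHom = P := by
  classical
  letI : P.IsPrime := hP
  set D := A ⧸ P
  letI : IsDomain D := Ideal.Quotient.isDomain P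
  set L := FractionRing D
  -- the R-algebra map A → L
  letI : Algebra R L := ((algebraMap D L).comp ((Ideal.Quotient.mk P).comp
    (algebraMap R A))).toAlgebra
  have halg : (algebraMap R L) = (algebraMap D L).comp ((Ideal.Quotient.mk P).comp
    (algebraMap R A)) := rfl
  have hkerDL : Function.Injective (algebraMap D L) := IsFractionRing.injective D L
  have hkerRL : RingHom.ker (algebraMap R L) = p := by
    rw [halg]
    ext x
    simp only [RingHom.mem_ker, RingHom.comp_apply]
    rw [show (0 : L) = algebraMap D L 0 by rw [map_zero]]
    rw [hkerDL.eq_iff, Ideal.Quotient.eq_zero_iff_mem]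
    rw [← hc, Ideal.mem_comap]
  have hunits : ∀ s : p.primeCompl, IsUnit (algebraMap R L s) := by
    intro s
    have hne : (algebraMap R L) s ≠ 0 := by
      intro h0
      have hmem : (s : R) ∈ RingHom.ker (algebraMap R L) := h0
      rw [hkerRL] at hmem
      exact s.2 hmem
    exact isUnit_iff_ne_zero.mpr hne
  -- lift to the localization
  let h₀ : Localization.AtPrime p →+* L := IsLocalization.lift (M := p.primeCompl) hunits
  have h₀comp : ∀ r : R, h₀ (algebraMap R (Localization.AtPrime p) r) = algebraMap R L r :=
    fun r => IsLocalization.lift_eq hunits r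
  have hker : IsLocalRing.maximalIdeal (Localization.AtPrime p) ≤ RingHom.ker h₀ := by
    rw [← Localization.AtPrime.map_eq_maximalIdeal]
    rw [Ideal.map_le_iff_le_comap]
    intro x hx
    rw [Ideal.mem_comap, RingHom.mem_ker, h₀comp, ← RingHom.mem_ker, hkerRL]
    exact hx
  -- the induced map on the residue field
  let fκ : Kappa R p →+* L := Ideal.Quotient.lift _ h₀ (fun a ha => hker ha)
  have fκcomp : ∀ r : R, fκ (algebraMap R (Kappa R p) r) = algebraMap R L r := by
    intro r
    rw [IsScalarTower.algebraMap_apply R (Localization.AtPrime p) (Kappa R p)]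
    exact h₀comp r
  let fκa : Kappa R p →ₐ[R] L := { fκ with commutes' := fκcomp }
  let g : A →ₐ[R] L :=
    { toRingHom := (algebraMap D L).comp (Ideal.Quotient.mk P)
      commutes' := fun r => rfl }
  let ψ : FiberRing R A p →ₐ[R] L := Algebra.TensorProduct.productMap fκa g
  refine ⟨RingHom.ker ψ.toRingHom, RingHom.ker_isPrime _, ?_⟩
  have : ψ.toRingHom.comp (Algebra.TensorProduct.includeRight (R := R) (A := Kappa R p)
      (B := A)).toRingHom = (algebraMap D L).comp (Ideal.Quotient.mk P) := by
    ext a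
    exact Algebra.TensorProduct.productMap_right_apply fκa g a
  rw [RingHom.comap_ker, this]
  ext x
  rw [RingHom.mem_ker, RingHom.comp_apply,
    show (0 : L) = algebraMap D L 0 by rw [map_zero],
    hkerDL.eq_iff, Ideal.Quotient.eq_zero_iff_mem]

/-- If some prime of `A` lies over `p` then the fibre ring is nontrivial. -/
lemma fiber_nontrivial_of_over (P : Ideal A) (hP : P.IsPrime)
    (hc : P.comap (algebraMap R A) = p) : Nontrivial (FiberRing R A p) := by
  obtain ⟨Q, hQ, -⟩ := exists_fiber_prime_over p P hP hc
  exact ⟨1, 0, fun h => hQ.ne_top (by rw [Ideal.eq_top_iff_one, h]; exact Q.zero_mem)⟩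

end Aux3

section Aux4

variable {R A : Type*} [CommRing R] [CommRing A] [Algebra R A] (p : Ideal R) [p.IsPrime]

/-- The contraction map from the spectrum of the fibre ring to the primes of `A` over `p`. -/
def toFiberFun (Q : PrimeSpectrum (FiberRing R A p)) : SpecAt R A p :=
  ⟨⟨Q.asIdeal.comap (Algebra.TensorProduct.includeRight (R := R) (A := Kappa R p)
      (B := A)).toRingHom, Ideal.IsPrime.comap _⟩, by
    show (Q.asIdeal.comap _).comap (algebraMap R A) = p
    rw [Ideal.comap_comap]
    have he : (Algebra.TensorProduct.includeRight (R := R) (A := Kappa R p)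
        (B := A)).toRingHom.comp (algebraMap R A) = algebraMap R (FiberRing R A p) :=
      RingHom.ext fun r => Algebra.TensorProduct.includeRight.commutes r
    rw [he]
    exact comap_fiber_prime p Q.asIdeal Q.isPrime⟩

/-- The spectrum of the fibre ring is order-isomorphic to the set of primes of `A` over `p`. -/
def fiberOrderIso : PrimeSpectrum (FiberRing R A p) ≃o SpecAt R A p where
  toEquiv := Equiv.ofBijective (toFiberFun p)
    ⟨by
      intro Q₁ Q₂ h
      have h' := congrArg (fun x => (Subtype.val x).asIdeal) h
      simp only [toFiberFun] at h'
      ext1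
      exact le_antisymm
        (fiber_comap_reflects p Q₁.asIdeal Q₂.asIdeal Q₂.isPrime (le_of_eq h'))
        (fiber_comap_reflects p Q₂.asIdeal Q₁.asIdeal Q₁.isPrime (le_of_eq h'.symm)),
      by
      rintro ⟨P, hP⟩
      obtain ⟨Q, hQ, hc⟩ := exists_fiber_prime_over p P.asIdeal P.isPrime hP
      exact ⟨⟨Q, hQ⟩, Subtype.ext (PrimeSpectrum.ext hc)⟩⟩
  map_rel_iff' := by
    intro Q₁ Q₂
    constructor
    · intro h
      exact fiber_comap_reflects p Q₁.asIdeal Q₂.asIdeal Q₂.isPrime h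
    · intro h
      show (toFiberFun p Q₁) ≤ (toFiberFun p Q₂)
      exact Ideal.comap_mono h

lemma fiberDim_eq_krullDim_specAt :
    fiberDim R A p = Order.krullDim (SpecAt R A p) := by
  rw [fiberDim, ringKrullDim]
  exact Order.krullDim_eq_of_orderIso (fiberOrderIso p)

lemma isEffective_iff (q : PrimeSpectrum R) :
    IsEffective R A q ↔
      ∃ P : PrimeSpectrum A, P.asIdeal.comap (algebraMap R A) = q.asIdeal := by
  constructor
  · intro h
    haveI : Nontrivial (FiberRing R A q.asIdeal) := h
    obtain ⟨Q⟩ : Nonempty (PrimeSpectrum (FiberRing R A q.asIdeal)) := inferInstance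
    obtain ⟨P, hP⟩ := toFiberFun q.asIdeal Q
    exact ⟨P, hP⟩
  · rintro ⟨P, hP⟩
    exact fiber_nontrivial_of_over q.asIdeal P.asIdeal P.isPrime hP

end Aux4

section Aux5

/-- Lift an `LTSeries` into a subtype, given that every element satisfies the predicate. -/
def LTSeries.liftSub {α : Type*} [Preorder α] (P : α → Prop) (s : LTSeries α)
    (h : ∀ i, P (s i)) : LTSeries {x // P x} where
  length := s.length
  toFun := fun i => ⟨s i, h i⟩
  step := fun i => by show _ < _; exact Subtype.mk_lt_mk.mpr (s.step i)

@[simp] lemma LTSeries.liftSub_length {α : Type*} [Preorder α] (P : α → Prop) (s : LTSeries α)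
    (h : ∀ i, P (s i)) : (LTSeries.liftSub P s h).length = s.length := rfl

lemma withBot_enat_eq_top {x : WithBot ℕ∞} (h : ∀ n : ℕ, (n : WithBot ℕ∞) ≤ x) : x = ⊤ := by
  induction x using WithBot.recBotCoe with
  | bot => simpa using h 1
  | coe a =>
    induction a using WithTop.recTopCoe with
    | top => rfl
    | coe m =>
      have := h (m + 1)
      have h2 : (((m : ℕ) : ℕ∞) : WithBot ℕ∞) < (((m + 1 : ℕ) : ℕ∞) : WithBot ℕ∞) := by
        rw [WithBot.coe_lt_coe]
        exact_mod_cast Nat.lt_succ_self m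
      rw [show ((m + 1 : ℕ) : WithBot ℕ∞) = (((m + 1 : ℕ) : ℕ∞) : WithBot ℕ∞) by norm_cast] at this
      exact absurd this (not_le_of_gt (lt_of_le_of_lt (by exact_mod_cast le_refl _) h2))

lemma krullDim_le_coe_of_forall {α : Type*} [Preorder α] {n : ℕ}
    (h : ∀ s : LTSeries α, s.length ≤ n) : Order.krullDim α ≤ ((n : ℕ∞) : WithBot ℕ∞) :=
  iSup_le fun s => by exact_mod_cast h s

lemma exists_series_of_krullDim_top {α : Type*} [Preorder α] (h : Order.krullDim α = ⊤)
    (n : ℕ) : ∃ s : LTSeries α, n ≤ s.length := by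
  by_contra hc
  push_neg at hc
  have h1 : Order.krullDim α ≤ ((n : ℕ∞) : WithBot ℕ∞) :=
    krullDim_le_coe_of_forall fun s => le_of_lt (hc s)
  rw [h] at h1
  have h2 : (((n : ℕ∞)) : WithBot ℕ∞) < ⊤ := by
    rw [← WithBot.coe_top, WithBot.coe_lt_coe]
    exact WithTop.coe_lt_top n
  exact absurd h1 (not_le_of_gt h2)

lemma exists_series_of_krullDim_eq_coe {α : Type*} [Preorder α] {n : ℕ}
    (h : Order.krullDim α = ((n : ℕ∞) : WithBot ℕ∞)) : ∃ s : LTSeries α, s.length = n := by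
  by_contra hc
  push_neg at hc
  have hne : Nonempty α := by
    by_contra he
    rw [not_nonempty_iff] at he
    rw [Order.krullDim_eq_bot] at h
    exact absurd h (by simp)
  obtain ⟨a⟩ := hne
  have hn0 : n ≠ 0 := fun h0 => hc (RelSeries.singleton _ a) (by simp [h0])
  have hle : ∀ s : LTSeries α, s.length ≤ n := fun s => by
    have h2 := Order.LTSeries.length_le_krullDim s
    rw [h] at h2
    exact_mod_cast h2
  have hlt : ∀ s : LTSeries α, s.length ≤ n - 1 := fun s => by
    have := hle s
    have := hc s
    omega
  have h1 := krullDim_le_coe_of_forall hlt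
  rw [h] at h1
  have : n ≤ n - 1 := by exact_mod_cast h1
  omega

end Aux5

section Aux6

variable {R A : Type*} [CommRing R] [CommRing A] [Algebra R A]

/-- Going-Down lifting of a chain of primes of `R` below a given prime of `A` over its top. -/
lemma gd_lift (hGD : SatisfiesGoingDown (algebraMap R A)) :
    ∀ (n : ℕ) (s : LTSeries (PrimeSpectrum R)) (P : PrimeSpectrum A), s.length = n →
      P.asIdeal.comap (algebraMap R A) = s.last.asIdeal →
      ∃ t : LTSeries (PrimeSpectrum A), t.length = s.length ∧ t.last = P := by
  intro n
  induction n with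
  | zero =>
    intro s P hlen _
    exact ⟨RelSeries.singleton _ P, by simp [hlen], rfl⟩
  | succ n ih =>
    intro s P hlen hc
    have hrel : s.eraseLast.last < s.last := s.eraseLast_last_rel_last (by omega)
    obtain ⟨P', hP', hle, hcom⟩ := hGD s.eraseLast.last.asIdeal s.last.asIdeal
      inferInstance inferInstance ((PrimeSpectrum.asIdeal_le_asIdeal _ _).mpr hrel.le)
      P.asIdeal P.isPrime hc
    have hlt : (⟨P', hP'⟩ : PrimeSpectrum A) < P := by
      refine lt_of_le_of_ne ((PrimeSpectrum.asIdeal_le_asIdeal _ _).mpr hle) ?_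
      intro heq
      apply hrel.ne
      apply PrimeSpectrum.ext
      rw [← hcom, ← hc, show P' = P.asIdeal from congrArg PrimeSpectrum.asIdeal heq]
    obtain ⟨t', ht'len, ht'last⟩ := ih s.eraseLast ⟨P', hP'⟩
      (by simp only [RelSeries.eraseLast_length]; omega) hcom
    refine ⟨t'.snoc P (ht'last ▸ hlt), ?_, RelSeries.last_snoc _ _ _⟩
    simp only [RelSeries.snoc_length, ht'len, RelSeries.eraseLast_length]
    omega

/-- Combine a chain of primes of `R` (via Going-Down) with a chain of primes of `A` starting
over the top of the first chain. -/
lemma combined_chain (hGD : SatisfiesGoingDown (algebraMap R A))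
    (s : LTSeries (PrimeSpectrum R)) (u : LTSeries (PrimeSpectrum A))
    (h : u.head.asIdeal.comap (algebraMap R A) = s.last.asIdeal) :
    ∃ v : LTSeries (PrimeSpectrum A), v.length = s.length + u.length := by
  obtain ⟨t, htlen, htlast⟩ := gd_lift hGD s.length s u.head rfl h
  exact ⟨t.smash u htlast, by simp [RelSeries.smash_length, htlen]⟩

end Aux6

section Aux7

variable {R A : Type*} [CommRing R] [CommRing A] [Algebra R A]

/-- The central combinatorial counting argument for the upper bound. -/
lemma comb (f : ℕ)
    (hf : ∀ (q : PrimeSpectrum R) (u : LTSeries (PrimeSpectrum A)),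
      (∀ i, (u i).asIdeal.comap (algebraMap R A) = q.asIdeal) → u.length ≤ f) :
    ∀ (N : ℕ) (t : LTSeries (PrimeSpectrum A)), t.length = N →
    ∀ (e : ℕ), (∀ s : LTSeries (PrimeSpectrum R),
        (∀ x, x ∈ s → ∃ j, x = PrimeSpectrum.comap (algebraMap R A) (t j)) → s.length ≤ e) →
      N ≤ f + (1 + f) * e := by
  intro N
  induction N using Nat.strong_induction_on with
  | _ N ih =>
    intro t ht e he
    classical
    set c : Fin (t.length + 1) → PrimeSpectrum R :=
      fun i => PrimeSpectrum.comap (algebraMap R A) (t i) with hcdef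
    have hcmono : ∀ {i j : Fin (t.length + 1)}, i ≤ j → c i ≤ c j := by
      intro i j hij
      rw [← PrimeSpectrum.asIdeal_le_asIdeal]
      simp only [hcdef, PrimeSpectrum.comap_asIdeal]
      exact Ideal.comap_mono ((PrimeSpectrum.asIdeal_le_asIdeal _ _).mpr (t.monotone hij))
    have hex : ∃ k, ∃ hk : k < t.length + 1, c ⟨k, hk⟩ = c (Fin.last _) :=
      ⟨t.length, by omega, rfl⟩
    let j := Nat.find hex
    obtain ⟨hjlt, hjc⟩ : ∃ hk : j < t.length + 1, c ⟨j, hk⟩ = c (Fin.last _) :=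
      Nat.find_spec hex
    have hjmin : ∀ k, k < j → ∀ hk : k < t.length + 1, c ⟨k, hk⟩ ≠ c (Fin.last _) := by
      intro k hk hkk
      have := Nat.find_min hex hk
      push_neg at this
      exact this hkk
    have hjle : j ≤ t.length := by omega
    have hconst : ∀ (i : Fin (t.length + 1)), j ≤ i.1 → c i = c (Fin.last _) := by
      intro i hi
      refine le_antisymm (hcmono (Fin.le_last i)) ?_
      rw [← hjc]
      exact hcmono (show (⟨j, hjlt⟩ : Fin (t.length + 1)) ≤ i from hi)
    have hblock : t.length - j ≤ f := by
      have hall : ∀ i : Fin ((t.drop ⟨j, hjlt⟩).length + 1),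
          ((t.drop ⟨j, hjlt⟩) i).asIdeal.comap (algebraMap R A) = (c (Fin.last _)).asIdeal := by
        intro i
        have heq : (t.drop ⟨j, hjlt⟩) i = t ⟨i.1 + j, by
            have := i.2
            simp only [RelSeries.drop_length] at this
            omega⟩ := rfl
        rw [heq, ← PrimeSpectrum.comap_asIdeal (algebraMap R A)]
        exact congrArg PrimeSpectrum.asIdeal (hconst _ (Nat.le_add_left j i.1))
      have := hf (c (Fin.last _)) (t.drop ⟨j, hjlt⟩) hall
      simpa only [RelSeries.drop_length] using this
    by_cases hj0 : j = 0
    · have hN : N ≤ f := by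
        rw [← ht]
        have := hblock
        omega
      exact le_trans hN (Nat.le_add_right _ _)
    · have hj1 : 1 ≤ j := by omega
      have hc0 : c ⟨0, by omega⟩ < c (Fin.last _) :=
        lt_of_le_of_ne (hcmono (by exact Fin.zero_le _)) (hjmin 0 hj1 _)
      have he1 : 1 ≤ e := by
        have hmem : ∀ x, x ∈ (RelSeries.singleton {(a, b) : PrimeSpectrum R × PrimeSpectrum R | a < b} (c ⟨0, by omega⟩)).snoc
            (c (Fin.last _)) hc0 → ∃ jj, x = PrimeSpectrum.comap (algebraMap R A) (t jj) := by
          intro x hx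
          replace hx := RelSeries.mem_snoc.mp hx
          rcases hx with hx | rfl
          · obtain ⟨i, rfl⟩ := hx
            exact ⟨⟨0, by omega⟩, rfl⟩
          · exact ⟨Fin.last _, rfl⟩
        have := he _ hmem
        simpa using this
      obtain ⟨e', rfl⟩ : ∃ e', e = e' + 1 := ⟨e - 1, by omega⟩
      set i' : Fin (t.length + 1) := ⟨j - 1, by omega⟩
      set t' := t.take i' with ht'def
      have ht'len : t'.length = j - 1 := rfl
      have hIH : j - 1 ≤ f + (1 + f) * e' := by
        refine ih (j - 1) (by omega) t' ht'len e' ?_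
        intro s hs
        have hlast : s.last < c (Fin.last _) := by
          obtain ⟨jdx, hj'⟩ := hs s.last s.last_mem
          have hidx : jdx.1 < j := by
            have h2 : jdx.1 < t'.length + 1 := jdx.2
            have h3 : t'.length = j - 1 := rfl
            omega
          have heq : t' jdx = t ⟨jdx.1, by omega⟩ := rfl
          rw [hj', heq]
          exact lt_of_le_of_ne (hcmono (Fin.le_last _)) (hjmin jdx.1 hidx _)
        have hmem : ∀ x, x ∈ s.snoc (c (Fin.last _)) hlast →
            ∃ jj, x = PrimeSpectrum.comap (algebraMap R A) (t jj) := by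
          intro x hx
          rw [RelSeries.mem_snoc] at hx
          rcases hx with hx | rfl
          · obtain ⟨jdx, hj'⟩ := hs x hx
            exact ⟨⟨jdx.1, by omega⟩, by rw [hj']; rfl⟩
          · exact ⟨Fin.last _, rfl⟩
        have := he _ hmem
        rw [RelSeries.snoc_length] at this
        omega
      have hsum : N = (j - 1) + (t.length - j) + 1 := by omega
      rw [hsum]
      have step1 : (j - 1) + (t.length - j) + 1 ≤ (f + (1 + f) * e') + f + 1 := by
        have := hblock
        omega
      refine le_trans step1 (le_of_eq ?_)
      ring

end Aux7

theorem stmt_3' (R A : Type*) [CommRing R] [CommRing A] [Algebra R A]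
    (hGD : SatisfiesGoingDown (algebraMap R A))
    (hmax : ∀ m : PrimeSpectrum R, IsEffective R A m →
      (∀ q : PrimeSpectrum R, IsEffective R A q → m ≤ q → q = m) →
      fdim R A = fiberDim R A m.asIdeal) :
    fdim R A + edim R A ≤ ringDim A ∧
      ringDim A ≤ fdim R A + (1 + fdim R A) * edim R A := by
  classical
  by_cases hE : Nonempty (PrimeSpectrum A)
  case neg =>
    have hempty : IsEmpty (PrimeSpectrum A) := not_nonempty_iff.mp hE
    have h1 : ringDim A = ⊥ := Order.krullDim_eq_bot
    haveI hEempty : IsEmpty {p : PrimeSpectrum R // IsEffective R A p} := by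
      constructor
      rintro ⟨q, hq⟩
      obtain ⟨P, -⟩ := (isEffective_iff (A := A) q).mp hq
      exact hempty.false P
    have h2 : edim R A = ⊥ := Order.krullDim_eq_bot
    have h3 : fdim R A = ⊥ := by
      rw [fdim]
      exact iSup_of_empty _
    constructor
    · rw [h1, h2, h3]
      simp
    · rw [h1]
      exact bot_le
  case pos =>
    obtain ⟨P₀⟩ := hE
    have hEff : ∀ P : PrimeSpectrum A,
        IsEffective R A (PrimeSpectrum.comap (algebraMap R A) P) := fun P =>
      (isEffective_iff _).mpr ⟨P, (PrimeSpectrum.comap_asIdeal _ _).symm⟩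
    haveI hEnonempty : Nonempty {p : PrimeSpectrum R // IsEffective R A p} :=
      ⟨⟨_, hEff P₀⟩⟩
    have hedim_le : ∀ s : LTSeries {p : PrimeSpectrum R // IsEffective R A p},
        (s.length : WithBot ℕ∞) ≤ edim R A := fun s =>
      Order.LTSeries.length_le_krullDim s
    have hAdim : ∀ v : LTSeries (PrimeSpectrum A),
        (v.length : WithBot ℕ∞) ≤ ringDim A := fun v =>
      Order.LTSeries.length_le_krullDim v
    have hfdim_ge : ∀ (q : PrimeSpectrum R) (hq : IsEffective R A q),
        fiberDim R A q.asIdeal ≤ fdim R A := fun q hq =>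
      le_iSup (fun p : {p : PrimeSpectrum R // IsEffective R A p} =>
        fiberDim R A p.1.asIdeal) ⟨q, hq⟩
    obtain ⟨ε, hε⟩ : ∃ x : ℕ∞, edim R A = (x : WithBot ℕ∞) := by
      have h0 : (0 : WithBot ℕ∞) ≤ edim R A := Order.krullDim_nonneg
      have hne : edim R A ≠ ⊥ := by
        intro hbot
        rw [hbot] at h0
        simp at h0
      obtain ⟨a, ha⟩ := WithBot.ne_bot_iff_exists.mp hne
      exact ⟨a, ha.symm⟩
    obtain ⟨f0, hf0⟩ : ∃ x : ℕ∞, fdim R A = (x : WithBot ℕ∞) := by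
      have h0 : (0 : WithBot ℕ∞) ≤ fdim R A := by
        obtain ⟨q₀⟩ := hEnonempty
        refine le_trans ?_ (hfdim_ge q₀.1 q₀.2)
        haveI : Nontrivial (FiberRing R A q₀.1.asIdeal) := q₀.2
        exact Order.krullDim_nonneg
      have hne : fdim R A ≠ ⊥ := by
        intro hbot
        rw [hbot] at h0
        simp at h0
      obtain ⟨a, ha⟩ := WithBot.ne_bot_iff_exists.mp hne
      exact ⟨a, ha.symm⟩
    constructor
    · -- lower bound
      by_cases hεtop : ε = ⊤
      · have htop : ringDim A = ⊤ := by
          apply withBot_enat_eq_top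
          intro n
          have hkE : Order.krullDim {p : PrimeSpectrum R // IsEffective R A p} = ⊤ := by
            have : edim R A = ⊤ := by rw [hε, hεtop, WithBot.coe_top]
            exact this
          obtain ⟨s, hs⟩ := exists_series_of_krullDim_top hkE n
          obtain ⟨P, hP⟩ := (isEffective_iff s.last.1).mp s.last.2
          obtain ⟨v, hv⟩ := combined_chain hGD
            (s.map Subtype.val (Subtype.strictMono_coe _)) (RelSeries.singleton _ P) (by
              show P.asIdeal.comap _ = _
              rw [LTSeries.last_map]
              exact hP)
          refine le_trans ?_ (hAdim v)
          have hlen : n ≤ v.length := by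
            rw [hv]
            simp only [LTSeries.map_length, RelSeries.singleton_length]
            omega
          exact_mod_cast hlen
        rw [htop]
        exact le_top
      · obtain ⟨n, hn⟩ := WithTop.ne_top_iff_exists.mp hεtop
        have hn' : ((n : ℕ) : ℕ∞) = ε := hn
        clear hn
        subst hn'
        have hkE : Order.krullDim {p : PrimeSpectrum R // IsEffective R A p}
            = ((n : ℕ∞) : WithBot ℕ∞) := hε
        obtain ⟨s, hslen⟩ := exists_series_of_krullDim_eq_coe hkE
        have hmaxl : ∀ q : PrimeSpectrum R, IsEffective R A q → s.last.1 ≤ q → q = s.last.1 := by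
          intro q hq hle
          by_contra hne
          have hlt : s.last < (⟨q, hq⟩ : {p : PrimeSpectrum R // IsEffective R A p}) := by
            rw [← Subtype.coe_lt_coe]
            exact lt_of_le_of_ne hle (fun h => hne h.symm)
          have hcontra := hedim_le (s.snoc ⟨q, hq⟩ hlt)
          rw [RelSeries.snoc_length, hslen, hε, WithBot.coe_natCast] at hcontra
          have : n + 1 ≤ n := by exact_mod_cast hcontra
          omega
        have hfm := hmax s.last.1 s.last.2 hmaxl
        have hkS : Order.krullDim (SpecAt R A s.last.1.asIdeal) = (f0 : WithBot ℕ∞) := by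
          rw [← fiberDim_eq_krullDim_specAt, ← hfm, hf0]
        have hchain : ∀ u' : LTSeries (SpecAt R A s.last.1.asIdeal),
            ∃ v : LTSeries (PrimeSpectrum A), v.length = n + u'.length := by
          intro u'
          obtain ⟨v, hv⟩ := combined_chain hGD
            (s.map Subtype.val (Subtype.strictMono_coe _))
            (u'.map Subtype.val (Subtype.strictMono_coe _)) (by
              show (u'.map Subtype.val (Subtype.strictMono_coe _)).head.asIdeal.comap _ = _
              rw [LTSeries.head_map, LTSeries.last_map]
              exact u'.head.2)
          refine ⟨v, ?_⟩
          rw [hv]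
          simp only [LTSeries.map_length, hslen]
        by_cases hf0top : f0 = ⊤
        · have htop : ringDim A = ⊤ := by
            apply withBot_enat_eq_top
            intro k
            obtain ⟨u', hu'⟩ := exists_series_of_krullDim_top (by rw [hkS, hf0top]; rfl) k
            obtain ⟨v, hv⟩ := hchain u'
            refine le_trans ?_ (hAdim v)
            have hlen : k ≤ v.length := by omega
            exact_mod_cast hlen
          rw [htop]
          exact le_top
        · obtain ⟨d, hd⟩ := WithTop.ne_top_iff_exists.mp hf0top
          have hd' : ((d : ℕ) : ℕ∞) = f0 := hd
          clear hd
          subst hd'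
          obtain ⟨u', hu'len⟩ := exists_series_of_krullDim_eq_coe (n := d) hkS
          obtain ⟨v, hv⟩ := hchain u'
          have hle := hAdim v
          rw [hf0, hε]
          have hvlen : v.length = n + d := by rw [hv, hu'len]
          rw [hvlen] at hle
          refine le_trans (le_of_eq ?_) hle
          rw [WithBot.coe_natCast, WithBot.coe_natCast]
          push_cast
          ring
    · -- upper bound
      rw [hf0, hε]
      have hRHS : (f0 : WithBot ℕ∞) + (1 + (f0 : WithBot ℕ∞)) * (ε : WithBot ℕ∞)
          = ((f0 + (1 + f0) * ε : ℕ∞) : WithBot ℕ∞) := by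
        rw [WithBot.coe_add, WithBot.coe_mul, WithBot.coe_add, WithBot.coe_one]
      rw [hRHS]
      have hgoal : ∀ t : LTSeries (PrimeSpectrum A),
          (t.length : ℕ∞) ≤ f0 + (1 + f0) * ε := by
        intro t
        by_cases hf0top : f0 = ⊤
        · rw [hf0top, top_add]
          exact le_top
        · obtain ⟨f, hf⟩ := WithTop.ne_top_iff_exists.mp hf0top
          have hf' : ((f : ℕ) : ℕ∞) = f0 := hf
          clear hf
          subst hf'
          by_cases hεtop : ε = ⊤
          · rw [hεtop, ENat.mul_top (by simp), add_top]
            exact le_top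
          · obtain ⟨nE, hnE⟩ := WithTop.ne_top_iff_exists.mp hεtop
            have hnE' : ((nE : ℕ) : ℕ∞) = ε := hnE
            clear hnE
            subst hnE'
            have hfbound : ∀ (q : PrimeSpectrum R) (u : LTSeries (PrimeSpectrum A)),
                (∀ i, (u i).asIdeal.comap (algebraMap R A) = q.asIdeal) → u.length ≤ f := by
              intro q u hall
              have hqe : IsEffective R A q := (isEffective_iff q).mpr ⟨u.head, hall 0⟩
              have h1 : ((LTSeries.liftSub
                    (fun P : PrimeSpectrum A =>
                      P.asIdeal.comap (algebraMap R A) = q.asIdeal) u hall).length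
                      : WithBot ℕ∞)
                  ≤ Order.krullDim (SpecAt R A q.asIdeal) :=
                Order.LTSeries.length_le_krullDim _
              rw [← fiberDim_eq_krullDim_specAt, LTSeries.liftSub_length] at h1
              have h2 := le_trans h1 (hfdim_ge q hqe)
              rw [hf0, WithBot.coe_natCast] at h2
              exact_mod_cast h2
            have hebound : ∀ s : LTSeries (PrimeSpectrum R),
                (∀ x ∈ s, ∃ j, x = PrimeSpectrum.comap (algebraMap R A) (t j)) →
                  s.length ≤ nE := by
              intro s hs
              have hser : ∀ i : Fin (s.length + 1), IsEffective R A (s i) := by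
                intro i
                obtain ⟨j, hj⟩ := hs (s i) ⟨i, rfl⟩
                rw [hj]
                exact hEff _
              have h1 := hedim_le (LTSeries.liftSub _ s hser)
              rw [LTSeries.liftSub_length, hε, WithBot.coe_natCast] at h1
              exact_mod_cast h1
            have hcomb := comb f hfbound t.length t rfl nE hebound
            exact_mod_cast hcomb
      refine iSup_le fun t => ?_
      rw [← WithBot.coe_natCast]
      exact WithBot.coe_le_coe.mpr (hgoal t)

/-- If `R → A` satisfies Going-Down and `f-dim_R(A) = dim_m(A)` for every
maximal effective prime `m` of `R` with respect to `A`, then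
`f-dim_R(A) + dim_e^A(R) ≤ dim A ≤ f-dim_R(A) + (1 + f-dim_R(A)) · dim_e^A(R)`. -/
theorem stmt_3 (R A : Type*) [CommRing R] [CommRing A] [Algebra R A]
    (hGD : SatisfiesGoingDown (algebraMap R A))
    (hmax : ∀ m : PrimeSpectrum R, IsEffective R A m →
      (∀ q : PrimeSpectrum R, IsEffective R A q → m ≤ q → q = m) →
      fdim R A = fiberDim R A m.asIdeal) :
    fdim R A + edim R A ≤ ringDim A ∧
      ringDim A ≤ fdim R A + (1 + fdim R A) * edim R A := by
  exact stmt_3' R A hGD hmax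
end
end

section
/- Let R be a commutative ring and A, B commutative R-algebras. The following are equivalent: (1) A ⊗_R B ≠ 0; (2) Spec_e^A(R) ∩ Spec_e^B(R) ≠ ∅; (3) there exist a prime ideal I of A and a prime ideal J of B such that I ∩ R = J ∩ R. -/
open TensorProduct

noncomputable section

lemma ker_algebraMap_kappa (R : Type*) [CommRing R] (p : Ideal R) [p.IsPrime] :
    RingHom.ker (algebraMap R (Kappa R p)) = p := by
  rw [IsScalarTower.algebraMap_eq R (Localization.AtPrime p) (Kappa R p),
    IsLocalRing.ResidueField.algebraMap_eq, ← RingHom.comap_ker,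
    IsLocalRing.ker_residue]
  exact Localization.AtPrime.comap_maximalIdeal ..

lemma eff_iff (R A : Type*) [CommRing R] [CommRing A] [Algebra R A] (p : PrimeSpectrum R) :
    Nontrivial (FiberRing R A p.asIdeal) ↔
      ∃ I : PrimeSpectrum A, I.asIdeal.comap (algebraMap R A) = p.asIdeal := by
  constructor
  · intro h
    obtain ⟨Q, hQmax⟩ := Ideal.exists_maximal (FiberRing R A p.asIdeal)
    haveI := hQmax.isPrime
    set inc : A →+* FiberRing R A p.asIdeal :=
      ↑(Algebra.TensorProduct.includeRight (R := R) (A := Kappa R p.asIdeal) (B := A))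
      with hinc
    refine ⟨⟨Q.comap inc, Ideal.IsPrime.comap _⟩, ?_⟩
    have hcomp : inc.comp (algebraMap R A) = algebraMap R (FiberRing R A p.asIdeal) :=
      AlgHom.comp_algebraMap _
    rw [Ideal.comap_comap, hcomp,
      IsScalarTower.algebraMap_eq R (Kappa R p.asIdeal) (FiberRing R A p.asIdeal),
      ← Ideal.comap_comap]
    have hbot : Q.comap (algebraMap (Kappa R p.asIdeal) (FiberRing R A p.asIdeal)) = ⊥ := by
      rcases (Q.comap (algebraMap (Kappa R p.asIdeal) (FiberRing R A p.asIdeal))).eq_bot_or_top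
        with h | h
      · exact h
      · exact absurd h (Ideal.IsPrime.comap _).ne_top
    rw [hbot, ← RingHom.ker_eq_comap_bot, ker_algebraMap_kappa]
  · rintro ⟨I, hI⟩
    haveI : I.asIdeal.IsPrime := I.isPrime
    set L := FractionRing (A ⧸ I.asIdeal) with hL
    set f1 : R →+* L := (algebraMap (A ⧸ I.asIdeal) L).comp
      ((Ideal.Quotient.mk I.asIdeal).comp (algebraMap R A)) with hf1
    have hunit : ∀ s : p.asIdeal.primeCompl, IsUnit (f1 s) := by
      rintro ⟨s, hs⟩
      refine isUnit_iff_ne_zero.mpr fun h0 => ?_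
      have h1 : (Ideal.Quotient.mk I.asIdeal) (algebraMap R A s) = 0 :=
        IsFractionRing.injective (A ⧸ I.asIdeal) L (by simpa [hf1] using h0)
      rw [Ideal.Quotient.eq_zero_iff_mem] at h1
      exact hs (by rw [← hI]; exact h1)
    set g : Localization.AtPrime p.asIdeal →+* L := IsLocalization.lift hunit with hgdef
    have hg : ∀ r : R, g (algebraMap R (Localization.AtPrime p.asIdeal) r) = f1 r :=
      fun r => IsLocalization.lift_eq hunit r
    have hker : ∀ x ∈ IsLocalRing.maximalIdeal (Localization.AtPrime p.asIdeal), g x = 0 := by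
      intro x hx
      rw [← Localization.AtPrime.map_eq_maximalIdeal] at hx
      have : Ideal.map (algebraMap R (Localization.AtPrime p.asIdeal)) p.asIdeal
          ≤ RingHom.ker g := by
        rw [Ideal.map_le_iff_le_comap]
        intro r hr
        have hrI : algebraMap R A r ∈ I.asIdeal := by rw [← hI] at hr; exact hr
        simp only [Ideal.mem_comap, RingHom.mem_ker, hg, hf1, RingHom.comp_apply,
          Ideal.Quotient.eq_zero_iff_mem.mpr hrI, map_zero]
      exact this hx
    set φ : Kappa R p.asIdeal →+* L :=
      Ideal.Quotient.lift _ g hker with hφ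
    letI : Algebra R L := f1.toAlgebra
    have hφcomm : ∀ r : R, φ (algebraMap R (Kappa R p.asIdeal) r) = algebraMap R L r := by
      intro r
      rw [IsScalarTower.algebraMap_apply R (Localization.AtPrime p.asIdeal) (Kappa R p.asIdeal)]
      show φ (IsLocalRing.residue _ (algebraMap R (Localization.AtPrime p.asIdeal) r)) = _
      rw [hφ]
      erw [Ideal.Quotient.lift_mk]
      exact hg r
    set φA : Kappa R p.asIdeal →ₐ[R] L := { φ with commutes' := hφcomm } with hφA
    set ψ : A →ₐ[R] L :=
      { toRingHom := (algebraMap (A ⧸ I.asIdeal) L).comp (Ideal.Quotient.mk I.asIdeal),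
        commutes' := fun r => rfl } with hψ
    exact (Algebra.TensorProduct.productMap φA ψ).toRingHom.domain_nontrivial
/-- The following are equivalent: `A ⊗_R B ≠ 0`;
`Spec_e^A(R) ∩ Spec_e^B(R) ≠ ∅`; there are primes `I` of `A` and `J` of `B` with
`I ∩ R = J ∩ R`. -/
theorem stmt_9 (R A B : Type*) [CommRing R] [CommRing A] [CommRing B]
    [Algebra R A] [Algebra R B] :
    (Nontrivial (A ⊗[R] B) ↔
        ∃ p : PrimeSpectrum R, IsEffective R A p ∧ IsEffective R B p) ∧
      ((∃ p : PrimeSpectrum R, IsEffective R A p ∧ IsEffective R B p) ↔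
        ∃ (I : PrimeSpectrum A) (J : PrimeSpectrum B),
          I.asIdeal.comap (algebraMap R A) = J.asIdeal.comap (algebraMap R B)) := by
  have h23 : (∃ p : PrimeSpectrum R, IsEffective R A p ∧ IsEffective R B p) ↔
      ∃ (I : PrimeSpectrum A) (J : PrimeSpectrum B),
        I.asIdeal.comap (algebraMap R A) = J.asIdeal.comap (algebraMap R B) := by
    constructor
    · rintro ⟨p, hA, hB⟩
      obtain ⟨I, hI⟩ := (eff_iff R A p).mp hA
      obtain ⟨J, hJ⟩ := (eff_iff R B p).mp hB
      exact ⟨I, J, hI.trans hJ.symm⟩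
    · rintro ⟨I, J, hIJ⟩
      refine ⟨⟨I.asIdeal.comap (algebraMap R A), Ideal.IsPrime.comap _⟩, ?_, ?_⟩
      · exact (eff_iff R A _).mpr ⟨I, rfl⟩
      · exact (eff_iff R B _).mpr ⟨J, hIJ.symm⟩
  refine ⟨?_, h23⟩
  constructor
  · intro h
    obtain ⟨Q, hQmax⟩ := Ideal.exists_maximal (A ⊗[R] B)
    haveI := hQmax.isPrime
    refine ⟨⟨Q.comap (algebraMap R (A ⊗[R] B)), Ideal.IsPrime.comap _⟩, ?_, ?_⟩
    · refine (eff_iff R A _).mpr ⟨⟨Q.comap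
        (Algebra.TensorProduct.includeLeft (R := R) (S := R) (A := A) (B := B) : A →+* A ⊗[R] B),
        Ideal.IsPrime.comap _⟩, ?_⟩
      rw [Ideal.comap_comap, AlgHom.comp_algebraMap]
    · refine (eff_iff R B _).mpr ⟨⟨Q.comap
        (Algebra.TensorProduct.includeRight (R := R) (A := A) (B := B) : B →+* A ⊗[R] B),
        Ideal.IsPrime.comap _⟩, ?_⟩
      rw [Ideal.comap_comap, AlgHom.comp_algebraMap]
  · rintro ⟨p, hA, hB⟩
    haveI hX : Nontrivial (FiberRing R A p.asIdeal) := hA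
    haveI hY : Nontrivial (FiberRing R B p.asIdeal) := hB
    set κ := Kappa R p.asIdeal
    haveI : Nontrivial ((FiberRing R A p.asIdeal) ⊗[κ] (FiberRing R B p.asIdeal)) :=
      Module.FaithfullyFlat.rTensor_nontrivial κ (FiberRing R B p.asIdeal)
        (FiberRing R A p.asIdeal)
    haveI : Nontrivial ((FiberRing R A p.asIdeal) ⊗[R] B) :=
      ((TensorProduct.AlgebraTensorModule.cancelBaseChange R κ κ
        (FiberRing R A p.asIdeal) B).symm.toEquiv.nontrivial)
    haveI : Nontrivial (κ ⊗[R] (A ⊗[R] B)) :=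
      ((TensorProduct.assoc R κ A B).symm.toEquiv.nontrivial)
    exact (Algebra.TensorProduct.includeRight (R := R) (A := κ)
      (B := A ⊗[R] B)).toRingHom.domain_nontrivial
end
end
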